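/- Fix α ≥ 0 and a positive integer n. Let u : [0,∞) → (ℤ/nℤ → [0,∞)) be a solution of the discrete scheme, i.e. for every x ∈ ℤ/nℤ the map t ↦ u_t(x) is differentiable with (d/dt) u_t(x) = Δ_n(φ_n ∘ u_t)(x) for all t ≥ 0. Set ū = max_{x ∈ ℤ/nℤ} u_0(x) and Ψ₀ = max_{x ∈ ℤ/nℤ} φ_n'(u_0(x))·|Δ_n(φ_n ∘ u_0)(x)|, and assume Ψ₀ > 0. Then, with T = 1 / ( 4·Ψ₀·(n^{−α} + ū) ), one has sup_{x ∈ ℤ/nℤ} sup_{0 ≤ s ≤ T} |(d/dt) u_s(x)| = sup_{x ∈ ℤ/nℤ} sup_{0 ≤ s ≤ T} |Δ_n(φ_n ∘ u_s)(x)| ≤ 2·(n^{−α} + ū)²·Ψ₀. -/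

import Mathlib

open Set Filter Topology

/-- `φ_n(u) = n^α φ(n^α u)` with `φ(ρ) = ρ/(1+ρ)`. -/
noncomputable def phin (α : ℝ) (n : ℕ) (u : ℝ) : ℝ :=
  (n : ℝ) ^ α * ((n : ℝ) ^ α * u / (1 + (n : ℝ) ^ α * u))

/-- The derivative `φ_n'(u) = (n^{−α} + u)^{−2}`. -/
noncomputable def phin' (α : ℝ) (n : ℕ) (u : ℝ) : ℝ :=
  (((n : ℝ) ^ (-α) + u) ^ 2)⁻¹

/-- The discrete Laplacian on `ℤ/nℤ`: `Δ_n f(x) = n² (f(x+1) + f(x−1) − 2 f(x))`. -/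
def discLap (n : ℕ) (f : ZMod n → ℝ) (x : ZMod n) : ℝ :=
  (n : ℝ) ^ 2 * (f (x + 1) + f (x - 1) - 2 * f x)

/-! ### A maximum principle for finite families -/

lemma max_nonincreasing {ι : Type*} [Fintype ι] [Nonempty ι]
    (f : ι → ℝ → ℝ) (d : ι → ℝ → ℝ) (a b : ℝ) (ha : 0 ≤ a)
    (hf : ∀ i, ∀ t ∈ Set.Icc a b, HasDerivWithinAt (f i) (d i t) (Set.Ici 0) t)
    (hbound : ∀ t ∈ Set.Ico a b, ∀ i, (∀ j, f j t ≤ f i t) → d i t ≤ 0) :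
    ∀ t ∈ Set.Icc a b, (⨆ i, f i t) ≤ ⨆ i, f i a := by
  set F : ℝ → ℝ := fun t => ⨆ i, f i t with hF
  have hbdd : ∀ t, BddAbove (Set.range fun i => f i t) :=
    fun t => (Set.finite_range _).bddAbove
  have hsub : Set.Icc a b ⊆ Set.Ici 0 := fun t ht => le_trans ha ht.1
  have hcont : ContinuousOn F (Set.Icc a b) := by
    intro t ht
    have h1 : ∀ i ∈ Finset.univ, Filter.Tendsto (f i) (𝓝[Set.Icc a b] t) (𝓝 (f i t)) :=
      fun i _ => ((hf i t ht).continuousWithinAt.mono hsub)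
    have := Filter.Tendsto.finset_sup'_nhds_apply Finset.univ_nonempty h1
    simp only [Finset.sup'_univ_eq_ciSup] at this; exact this
  have key : ∀ ε > 0, ∀ t ∈ Set.Icc a b, F t ≤ F a + ε * (t - a) := by
    intro ε hε t ht
    have H := le_gronwallBound_of_liminf_deriv_right_le (f := F) (f' := fun _ => ε)
      (δ := F a) (K := 0) (ε := ε) (a := a) (b := b) hcont ?_ le_rfl ?_ t ht
    · rwa [gronwallBound_K0] at H
    · intro t ht' r hr
      have hr' : ε < r := hr
      have ht0 : (0:ℝ) ≤ t := le_trans ha ht'.1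
      have hIoi : Set.Ioi t ⊆ Set.Ici 0 \ {t} := fun z hz =>
        ⟨le_trans ht0 (le_of_lt hz), ne_of_gt hz⟩
      have hle : 𝓝[>] t ≤ 𝓝[Set.Ici 0 \ {t}] t := nhdsWithin_mono t hIoi
      have hle2 : 𝓝[>] t ≤ 𝓝[Set.Ici 0] t :=
        nhdsWithin_mono t (fun z hz => le_trans ht0 (le_of_lt hz))
      have htIcc : t ∈ Set.Icc a b := ⟨ht'.1, le_of_lt ht'.2⟩
      have hev : ∀ i, ∀ᶠ z in 𝓝[>] t, f i z < F t + r * (z - t) := by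
        intro i
        by_cases hmax : ∀ j, f j t ≤ f i t
        · have hd : d i t ≤ 0 := hbound t ht' i hmax
          have hslope : Filter.Tendsto (slope (f i) t) (𝓝[Set.Ici 0 \ {t}] t) (𝓝 (d i t)) :=
            hasDerivWithinAt_iff_tendsto_slope.mp (hf i t htIcc)
          have hslope' : Filter.Tendsto (slope (f i) t) (𝓝[>] t) (𝓝 (d i t)) :=
            hslope.mono_left hle
          have hev1 : ∀ᶠ z in 𝓝[>] t, slope (f i) t z < r :=
            hslope'.eventually_lt_const (lt_of_le_of_lt hd (lt_trans hε hr'))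
          filter_upwards [hev1, self_mem_nhdsWithin] with z hz hzt
          have hzt' : (0:ℝ) < z - t := sub_pos.mpr hzt
          have : (f i z - f i t) / (z - t) < r := by
            rwa [slope_def_field] at hz
          have h2 : f i z - f i t < r * (z - t) := by
            rwa [div_lt_iff₀ hzt'] at this
          have h3 : f i t ≤ F t := le_ciSup (hbdd t) i
          linarith
        · push_neg at hmax
          obtain ⟨j, hj⟩ := hmax
          have hlt : f i t < F t := lt_of_lt_of_le hj (le_ciSup (hbdd t) j)
          have hcw : Filter.Tendsto (f i) (𝓝[>] t) (𝓝 (f i t)) :=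
            ((hf i t htIcc).continuousWithinAt).mono_left hle2
          have hev1 : ∀ᶠ z in 𝓝[>] t, f i z < F t := hcw.eventually_lt_const hlt
          filter_upwards [hev1, self_mem_nhdsWithin] with z hz hzt
          have hzt' : (0:ℝ) < z - t := sub_pos.mpr hzt
          have hrpos : (0:ℝ) < r := lt_trans hε hr'
          nlinarith
      have hall : ∀ᶠ z in 𝓝[>] t, ∀ i, f i z < F t + r * (z - t) := eventually_all.mpr hev
      refine (hall.and self_mem_nhdsWithin).frequently.mono ?_
      rintro z ⟨hz, hzt⟩
      have hzt' : (0:ℝ) < z - t := sub_pos.mpr hzt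
      obtain ⟨i₀, hi₀⟩ := Finite.exists_max (fun i => f i z)
      have hFz : F z ≤ f i₀ z := ciSup_le hi₀
      have : F z - F t < r * (z - t) := by
        have := hz i₀
        linarith
      calc (z - t)⁻¹ * (F z - F t) < (z - t)⁻¹ * (r * (z - t)) :=
            mul_lt_mul_of_pos_left this (inv_pos.mpr hzt')
        _ = r := by field_simp
    · intro x _; simp
  intro t ht
  by_contra hcon
  push_neg at hcon
  have htaux : 0 ≤ t - a := sub_nonneg.mpr ht.1
  set c := F t - F a with hc
  have hc0 : 0 < c := sub_pos.mpr hcon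
  have := key (c / (2 * (t - a + 1))) (by positivity) t ht
  have h1 : c / (2 * (t - a + 1)) * (t - a) < c := by
    rw [div_mul_eq_mul_div, div_lt_iff₀ (by positivity)]
    nlinarith
  simp only [hc] at h1
  linarith

/-! ### Calculus facts about `phin` -/

lemma npow_pos (α : ℝ) {n : ℕ} (hn : n ≠ 0) : (0:ℝ) < (n:ℝ) ^ α :=
  Real.rpow_pos_of_pos (by exact_mod_cast Nat.pos_of_ne_zero hn) α

lemma phin_hasDerivAt (α : ℝ) {n : ℕ} (hn : n ≠ 0) {r : ℝ} (hr : 0 ≤ r) :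
    HasDerivAt (phin α n) (phin' α n r) r := by
  have hc : (0:ℝ) < (n:ℝ) ^ α := npow_pos α hn
  set c := (n:ℝ) ^ α with hcdef
  have hden : (0:ℝ) < 1 + c * r := by positivity
  have h1 : HasDerivAt (fun u : ℝ => c * u) c r := by
    simpa using (hasDerivAt_id r).const_mul c
  have h2 : HasDerivAt (fun u : ℝ => 1 + c * u) c r := h1.const_add 1
  have h3 : HasDerivAt (fun u : ℝ => c * u / (1 + c * u))
      ((c * (1 + c * r) - c * r * c) / (1 + c * r) ^ 2) r := h1.div h2 (ne_of_gt hden)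
  have h4 : HasDerivAt (fun u : ℝ => c * (c * u / (1 + c * u)))
      (c * ((c * (1 + c * r) - c * r * c) / (1 + c * r) ^ 2)) r := h3.const_mul c
  have hfun : phin α n = fun u : ℝ => c * (c * u / (1 + c * u)) := by
    funext u; simp [phin, hcdef]
  rw [hfun]
  convert h4 using 1
  have hmn : (n:ℝ) ^ (-α) = c⁻¹ := by
    rw [hcdef, Real.rpow_neg (by positivity)]
  unfold phin'
  rw [hmn]
  field_simp
  ring

lemma phin'_hasDerivAt (α : ℝ) {n : ℕ} (hn : n ≠ 0) {r : ℝ} (hr : 0 ≤ r) :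
    HasDerivAt (phin' α n) (-2 * ((((n:ℝ)) ^ (-α) + r) ^ 3)⁻¹) r := by
  have hm : (0:ℝ) < (n:ℝ) ^ (-α) := npow_pos (-α) hn
  set m := (n:ℝ) ^ (-α) with hmdef
  have hmr : (0:ℝ) < m + r := by positivity
  have h1 : HasDerivAt (fun u : ℝ => (m + u) ^ 2) (2 * (m + r)) r := by
    have := ((hasDerivAt_id r).const_add m).pow 2
    simp at this; exact this
  have h2 : HasDerivAt (fun u : ℝ => ((m + u) ^ 2)⁻¹)
      (-(2 * (m + r)) / ((m + r) ^ 2) ^ 2) r := h1.inv (by positivity)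
  have hfun : phin' α n = fun u : ℝ => ((m + u) ^ 2)⁻¹ := by
    funext u; simp [phin', hmdef]
  rw [hfun]
  convert h2 using 1
  field_simp

lemma phin_mono (α : ℝ) {n : ℕ} (hn : n ≠ 0) {a b : ℝ} (ha : 0 ≤ a) (hab : a ≤ b) :
    phin α n a ≤ phin α n b := by
  have hc : (0:ℝ) < (n:ℝ) ^ α := npow_pos α hn
  unfold phin
  have hda : (0:ℝ) < 1 + (n:ℝ)^α * a := by nlinarith [mul_nonneg hc.le ha]
  have hdb : (0:ℝ) < 1 + (n:ℝ)^α * b := by nlinarith [mul_nonneg hc.le (ha.trans hab)]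
  apply mul_le_mul_of_nonneg_left _ hc.le
  rw [div_le_div_iff₀ hda hdb]
  nlinarith

/-- `w_t(x) = Δ_n(φ_n ∘ u_t)(x)`. -/
noncomputable def wF (α : ℝ) (n : ℕ) (u : ℝ → ZMod n → ℝ) (t : ℝ) (x : ZMod n) : ℝ :=
  discLap n (fun y => phin α n (u t y)) x

/-- `v_t(x) = φ_n'(u_t(x)) w_t(x)`. -/
noncomputable def vF (α : ℝ) (n : ℕ) (u : ℝ → ZMod n → ℝ) (t : ℝ) (x : ZMod n) : ℝ :=
  phin' α n (u t x) * wF α n u t x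

section deriv

variable (α : ℝ) {n : ℕ} (u : ℝ → ZMod n → ℝ)

lemma wF_hasDeriv (hn : n ≠ 0)
    (hpos : ∀ t, 0 ≤ t → ∀ x, 0 ≤ u t x)
    (hu : ∀ t, 0 ≤ t → ∀ x : ZMod n, HasDerivWithinAt (fun s => u s x)
      (discLap n (fun y => phin α n (u t y)) x) (Set.Ici 0) t)
    {t : ℝ} (ht : 0 ≤ t) (x : ZMod n) :
    HasDerivWithinAt (fun s => wF α n u s x) (discLap n (vF α n u t) x) (Set.Ici 0) t := by
  have hφ : ∀ y, HasDerivWithinAt (fun s => phin α n (u s y))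
      (phin' α n (u t y) * wF α n u t y) (Set.Ici 0) t := by
    intro y
    have H := HasDerivAt.comp_hasDerivWithinAt (h₂ := phin α n) t
      (phin_hasDerivAt α hn (hpos t ht y)) (hu t ht y)
    exact H
  exact (((hφ (x+1)).add (hφ (x-1))).sub ((hφ x).const_mul 2)).const_mul ((n:ℝ)^2)

lemma vF_hasDeriv (hn : n ≠ 0)
    (hpos : ∀ t, 0 ≤ t → ∀ x, 0 ≤ u t x)
    (hu : ∀ t, 0 ≤ t → ∀ x : ZMod n, HasDerivWithinAt (fun s => u s x)
      (discLap n (fun y => phin α n (u t y)) x) (Set.Ici 0) t)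
    {t : ℝ} (ht : 0 ≤ t) (x : ZMod n) :
    HasDerivWithinAt (fun s => vF α n u s x)
      (-2 * (((n:ℝ) ^ (-α) + u t x) ^ 3)⁻¹ * wF α n u t x * wF α n u t x
        + phin' α n (u t x) * discLap n (vF α n u t) x) (Set.Ici 0) t := by
  have hφ' : HasDerivWithinAt (fun s => phin' α n (u s x))
      (-2 * (((n:ℝ) ^ (-α) + u t x) ^ 3)⁻¹ * wF α n u t x) (Set.Ici 0) t := by
    have H := HasDerivAt.comp_hasDerivWithinAt (h₂ := phin' α n) t
      (phin'_hasDerivAt α hn (hpos t ht x)) (hu t ht x)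
    exact H
  exact hφ'.mul (wF_hasDeriv α u hn hpos hu ht x)

end deriv

/-! ### Abstract arithmetic lemmas -/

lemma lap_bound (n2 β s1 P v0 v1 v2 : ℝ) (hn2 : 0 ≤ n2)
    (h1 : s1 * (β * v1) ≤ P) (h2 : s1 * (β * v2) ≤ P) (h0 : s1 * (β * v0) = P) :
    β * (s1 * (n2 * (v1 + v2 - 2 * v0))) ≤ 0 := by
  nlinarith [mul_nonneg hn2 (sub_nonneg.mpr h1), mul_nonneg hn2 (sub_nonneg.mpr h2)]

lemma final_bound (s1 β c M P q w φ Δ v ψe : ℝ)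
    (hs1 : s1 = 1 ∨ s1 = -1) (hβ : 0 < β) (hM : 0 < M)
    (hq : 0 < q) (hqM : q ≤ M) (hw : w = q^2 * v)
    (hφ : 0 ≤ φ) (hΔ : β * (s1 * Δ) ≤ 0)
    (hvP : s1 * (β * v) = P) (hP0 : 0 ≤ P) (hPlt : P < ψe)
    (hc : c = 2 * M * ψe) :
    s1 * (-c * v + β * (-2 * (q^3)⁻¹ * w * w + φ * Δ)) ≤ 0 := by
  have hψe : 0 < ψe := lt_of_le_of_lt hP0 hPlt
  have hc0 : 0 < c := by rw [hc]; positivity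
  have e2 : -2 * (q^3)⁻¹ * w * w = -2 * (q * v^2) := by
    rw [hw]; field_simp
  rw [e2]
  rcases hs1 with rfl | rfl
  · rw [one_mul] at hvP
    have hΔ' : β * Δ ≤ 0 := by nlinarith [hΔ]
    have t3 : β * (β * (φ * Δ)) ≤ 0 := by nlinarith [mul_nonneg hβ.le hφ, hΔ']
    have hβL : β * (1 * (-c * v + β * (-2 * (q * v^2) + φ * Δ))) ≤ 0 := by
      nlinarith [t3, mul_nonneg hc0.le hP0,
        mul_nonneg (mul_nonneg (mul_nonneg hβ.le hβ.le) hq.le) (sq_nonneg v), hvP]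
    by_contra hcon
    push_neg at hcon
    nlinarith [mul_pos hβ hcon]
  · have hβv : β * v = -P := by nlinarith [hvP]
    have hΔ' : 0 ≤ β * Δ := by nlinarith [hΔ]
    have t3 : 0 ≤ β * (β * (φ * Δ)) := by nlinarith [mul_nonneg hβ.le hφ, hΔ']
    have hsq : β^2 * v^2 = P^2 := by nlinarith [hβv]
    have hqle : q * (β^2 * v^2) ≤ M * P^2 := by
      rw [hsq]
      exact mul_le_mul_of_nonneg_right hqM (sq_nonneg P)
    have hPP : 0 ≤ 2 * M * P * (ψe - P) := by
      apply mul_nonneg (mul_nonneg (by linarith) hP0) (by linarith)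
    have hβL : β * (-1 * (-c * v + β * (-2 * (q * v^2) + φ * Δ))) ≤ 0 := by
      nlinarith [t3, hqle, hPP, hβv, hsq]
    by_contra hcon
    push_neg at hcon
    nlinarith [mul_pos hβ hcon]

/-! ### Main theorem -/

/-- time regularity: let `u` be a nonnegative solution of the discrete
scheme `(d/dt) u_t(x) = Δ_n(φ_n ∘ u_t)(x)` on `[0,∞)`, and set `ū = max_x u_0(x)` and
`Ψ₀ = max_x φ_n'(u_0(x)) |Δ_n(φ_n ∘ u_0)(x)| > 0`.  Then, with
`T = 1/(4 Ψ₀ (n^{−α} + ū))`, for all `x` and all `0 ≤ s ≤ T`, the time derivative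
`(d/dt) u_s(x) = Δ_n(φ_n ∘ u_s)(x)` is bounded in absolute value by
`2 (n^{−α} + ū)² Ψ₀`. -/
theorem discrete_scheme_time_regularity
    (α : ℝ) (hα : 0 ≤ α) (n : ℕ) [NeZero n]
    (u : ℝ → ZMod n → ℝ)
    (hpos : ∀ t, 0 ≤ t → ∀ x, 0 ≤ u t x)
    (hu : ∀ t, 0 ≤ t → ∀ x : ZMod n,
      HasDerivWithinAt (fun s => u s x)
        (discLap n (fun y => phin α n (u t y)) x) (Set.Ici 0) t)
    (ubar Ψ₀ T : ℝ)
    (hubar : ubar = ⨆ x : ZMod n, u 0 x)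
    (hΨ₀ : Ψ₀ = ⨆ x : ZMod n, phin' α n (u 0 x) * |discLap n (fun y => phin α n (u 0 y)) x|)
    (hΨpos : 0 < Ψ₀)
    (hT : T = 1 / (4 * Ψ₀ * ((n : ℝ) ^ (-α) + ubar))) :
    ∀ x : ZMod n, ∀ s, 0 ≤ s → s ≤ T →
      |discLap n (fun y => phin α n (u s y)) x| ≤ 2 * ((n : ℝ) ^ (-α) + ubar) ^ 2 * Ψ₀ := by
  intro x s hs0 hsT
  have hn : n ≠ 0 := NeZero.ne n
  have hm : (0:ℝ) < (n:ℝ) ^ (-α) := npow_pos (-α) hn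
  have hbdd : ∀ (g : ZMod n → ℝ), BddAbove (Set.range g) :=
    fun g => (Set.finite_range _).bddAbove
  have hbdd2 : ∀ (g : ZMod n × Bool → ℝ), BddAbove (Set.range g) :=
    fun g => (Set.finite_range _).bddAbove
  have hubar0 : (0:ℝ) ≤ ubar := by
    rw [hubar]
    exact le_trans (hpos 0 le_rfl 0) (le_ciSup (hbdd _) 0)
  have hM : (0:ℝ) < (n:ℝ) ^ (-α) + ubar := by linarith
  set M := (n:ℝ) ^ (-α) + ubar with hMdef
  -- maximum principle
  have hmaxp : ∀ t, 0 ≤ t → ∀ y, u t y ≤ ubar := by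
    intro t ht y
    have key := max_nonincreasing (fun z τ => u τ z) (fun z τ => wF α n u τ z) 0 t le_rfl
      (fun z τ hτ => hu τ hτ.1 z) ?_ t ⟨ht, le_rfl⟩
    · calc u t y ≤ ⨆ z, u t z := le_ciSup (hbdd _) y
        _ ≤ ⨆ z, u 0 z := key
        _ = ubar := hubar.symm
    · rintro τ ⟨hτ0, _⟩ z hmaxz
      show discLap n (fun y => phin α n (u τ y)) z ≤ 0
      have h1 : phin α n (u τ (z+1)) ≤ phin α n (u τ z) :=
        phin_mono α hn (hpos τ hτ0 (z+1)) (hmaxz (z+1))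
      have h2 : phin α n (u τ (z-1)) ≤ phin α n (u τ z) :=
        phin_mono α hn (hpos τ hτ0 (z-1)) (hmaxz (z-1))
      have hnn2 : (0:ℝ) ≤ (n:ℝ)^2 := by positivity
      unfold discLap
      nlinarith
  -- Step 4
  have step4 : ∀ ε, 0 < ε → ε < Ψ₀ → ∀ t ∈ Set.Icc 0 T, ∀ p : ZMod n × Bool,
      (if p.2 then (1:ℝ) else -1) * ((1 - 2*M*(Ψ₀+ε)*t) * vF α n u t p.1) < Ψ₀ + ε := by
    intro ε hε hεΨ
    set c := 2*M*(Ψ₀+ε) with hcdef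
    have hc : 0 < c := by positivity
    have hT0 : 0 < T := by rw [hT]; positivity
    have hcT : c * T < 1 := by
      rw [hT, hcdef]
      rw [mul_one_div, div_lt_one (by positivity)]
      nlinarith
    have hβ : ∀ τ ∈ Set.Icc (0:ℝ) T, 0 < 1 - c * τ := by
      rintro τ ⟨h0, h1⟩
      have : c * τ ≤ c * T := by nlinarith
      linarith
    set h : ZMod n × Bool → ℝ → ℝ :=
      fun p τ => (if p.2 then (1:ℝ) else -1) * ((1 - c*τ) * vF α n u τ p.1) with hh
    set d : ZMod n × Bool → ℝ → ℝ :=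
      fun p τ => (if p.2 then (1:ℝ) else -1) *
        (-c * vF α n u τ p.1 + (1 - c*τ) *
          (-2 * (((n:ℝ) ^ (-α) + u τ p.1) ^ 3)⁻¹ * wF α n u τ p.1 * wF α n u τ p.1
            + phin' α n (u τ p.1) * discLap n (vF α n u τ) p.1)) with hd
    have hder : ∀ p : ZMod n × Bool, ∀ t : ℝ, 0 ≤ t →
        HasDerivWithinAt (h p) (d p t) (Set.Ici 0) t := by
      intro p t ht
      have hlin : HasDerivWithinAt (fun τ : ℝ => 1 - c * τ) (-c) (Set.Ici 0) t := by
        simpa using ((hasDerivWithinAt_id t (Set.Ici 0)).const_mul c).const_sub 1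
      have := (hlin.mul (vF_hasDeriv α u hn hpos hu ht p.1)).const_mul
        (if p.2 then (1:ℝ) else -1)
      convert this using 1
      all_goals rfl
    set G : ℝ → ℝ := fun τ => ⨆ p, h p τ with hG
    have hG0 : G 0 = Ψ₀ := by
      have h0 : ∀ p : ZMod n × Bool, h p 0 = (if p.2 then (1:ℝ) else -1) * vF α n u 0 p.1 := by
        intro p; simp [hh]
      have habs : ∀ y : ZMod n,
          phin' α n (u 0 y) * |discLap n (fun z => phin α n (u 0 z)) y| = |vF α n u 0 y| := by
        intro y
        have h1 : 0 ≤ phin' α n (u 0 y) := by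
          simp only [phin']; positivity
        rw [vF, abs_mul, abs_of_nonneg h1]
        rfl
      apply le_antisymm
      · apply ciSup_le
        intro p
        rw [h0]
        have h1 : (if p.2 then (1:ℝ) else -1) * vF α n u 0 p.1 ≤ |vF α n u 0 p.1| := by
          split_ifs
          · rw [one_mul]; exact le_abs_self _
          · rw [neg_one_mul]; exact neg_le_abs _
        refine le_trans h1 ?_
        rw [hΨ₀, ← habs]
        exact le_ciSup (f := fun z : ZMod n =>
          phin' α n (u 0 z) * |discLap n (fun y => phin α n (u 0 y)) z|) (hbdd _) p.1
      · rw [hΨ₀]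
        apply ciSup_le
        intro y
        rw [habs]
        have ht1 : h (y, true) 0 ≤ G 0 :=
          le_ciSup (hbdd2 fun p => h p 0) (y, true)
        have hf1 : h (y, false) 0 ≤ G 0 :=
          le_ciSup (hbdd2 fun p => h p 0) (y, false)
        rw [h0] at ht1 hf1
        norm_num at ht1 hf1
        exact abs_le.mpr ⟨by linarith, ht1⟩
    have hGcont : ContinuousOn G (Set.Icc 0 T) := by
      intro τ hτ
      have h1 : ∀ p ∈ Finset.univ, Filter.Tendsto (h p) (𝓝[Set.Icc 0 T] τ) (𝓝 (h p τ)) :=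
        fun p _ => ((hder p τ hτ.1).continuousWithinAt.mono (fun z hz => hz.1))
      have := Filter.Tendsto.finset_sup'_nhds_apply Finset.univ_nonempty h1
      simp only [Finset.sup'_univ_eq_ciSup] at this; exact this
    by_contra hcon
    push_neg at hcon
    obtain ⟨t, htI, p, hge⟩ := hcon
    have hGt : Ψ₀ + ε ≤ G t := le_trans hge (le_ciSup (hbdd2 fun q => h q t) p)
    set S : Set ℝ := Set.Icc 0 T ∩ G ⁻¹' (Set.Ici (Ψ₀ + ε)) with hSdef
    have hSclosed : IsClosed S :=
      hGcont.preimage_isClosed_of_isClosed isClosed_Icc isClosed_Ici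
    have hSne : S.Nonempty := ⟨t, htI, hGt⟩
    have hSbdd : BddBelow S := ⟨0, fun τ hτ => hτ.1.1⟩
    set b := sInf S with hbdef
    have hbS : b ∈ S := hSclosed.csInf_mem hSne hSbdd
    have hb0 : 0 ≤ b := hbS.1.1
    have hbT : b ≤ T := hbS.1.2
    have hGb : Ψ₀ + ε ≤ G b := hbS.2
    have hbne : b ≠ 0 := by
      intro h0
      rw [h0, hG0] at hGb
      linarith
    have hIco : ∀ τ ∈ Set.Ico 0 b, G τ < Ψ₀ + ε := by
      rintro τ ⟨hτ0, hτb⟩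
      by_contra hge2
      push_neg at hge2
      have hτS : τ ∈ S := ⟨⟨hτ0, le_trans hτb.le hbT⟩, hge2⟩
      exact absurd (csInf_le hSbdd hτS) (not_le.mpr hτb)
    have hmono := max_nonincreasing h d 0 b le_rfl
      (fun q τ hτ => hder q τ hτ.1) ?_ b ⟨hb0, le_rfl⟩
    · have hGble : G b ≤ G 0 := hmono
      rw [hG0] at hGble
      linarith
    · -- the derivative bound at maximizers
      rintro τ ⟨hτ0, hτb⟩ p hpmax
      have hτT : τ ∈ Set.Icc (0:ℝ) T := ⟨hτ0, hτb.le.trans hbT⟩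
      have hβp : 0 < 1 - c * τ := hβ τ hτT
      set y := p.1 with hydef
      set β := 1 - c * τ with hβdef
      set s1 := (if p.2 then (1:ℝ) else -1) with hs1def
      have hs1 : s1 = 1 ∨ s1 = -1 := by
        rw [hs1def]; split_ifs; exacts [Or.inl rfl, Or.inr rfl]
      have hvt : ∀ z, (1:ℝ) * (β * vF α n u τ z) ≤ h p τ := fun z => hpmax (z, true)
      have hvf : ∀ z, (-1:ℝ) * (β * vF α n u τ z) ≤ h p τ := fun z => hpmax (z, false)
      have habsv : ∀ z, β * |vF α n u τ z| ≤ h p τ := by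
        intro z
        rcases abs_cases (vF α n u τ z) with ⟨he, _⟩ | ⟨he, _⟩ <;> rw [he]
        · have := hvt z; linarith
        · have := hvf z; nlinarith
      have hP0 : 0 ≤ h p τ :=
        le_trans (mul_nonneg hβp.le (abs_nonneg _)) (habsv y)
      have hPlt : h p τ < Ψ₀ + ε :=
        lt_of_le_of_lt (le_ciSup (hbdd2 fun q => h q τ) p) (hIco τ ⟨hτ0, hτb⟩)
      have huy0 : 0 ≤ u τ y := hpos τ hτ0 y
      have hmu : 0 < (n:ℝ)^(-α) + u τ y := by linarith
      have hmuM : (n:ℝ)^(-α) + u τ y ≤ M := by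
        have := hmaxp τ hτ0 y; rw [hMdef]; linarith
      have hwv : wF α n u τ y = ((n:ℝ)^(-α) + u τ y)^2 * vF α n u τ y := by
        rw [vF, phin']; field_simp
      have hsv : ∀ z, s1 * (β * vF α n u τ z) ≤ h p τ := by
        intro z
        rcases hs1 with h1 | h1 <;> rw [h1]
        · exact hvt z
        · exact hvf z
      have hvP : s1 * (β * vF α n u τ y) = h p τ := rfl
      have hn2 : (0:ℝ) ≤ (n:ℝ)^2 := by positivity
      have hΔ : β * (s1 * discLap n (vF α n u τ) y) ≤ 0 := by
        rw [discLap]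
        exact lap_bound ((n:ℝ)^2) β s1 (h p τ) (vF α n u τ y) (vF α n u τ (y+1))
          (vF α n u τ (y-1)) hn2 (hsv (y+1)) (hsv (y-1)) hvP
      have hφ0 : 0 ≤ phin' α n (u τ y) := by
        simp only [phin']; positivity
      have hdp : d p τ = s1 *
          (-c * vF α n u τ y + β *
            (-2 * (((n:ℝ)^(-α) + u τ y)^3)⁻¹ * wF α n u τ y * wF α n u τ y
              + phin' α n (u τ y) * discLap n (vF α n u τ) y)) := rfl
      show d p τ ≤ 0
      rw [hdp]
      exact final_bound s1 β c M (h p τ) ((n:ℝ)^(-α) + u τ y) (wF α n u τ y)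
        (phin' α n (u τ y)) (discLap n (vF α n u τ) y) (vF α n u τ y) (Ψ₀ + ε)
        hs1 hβp hM hmu hmuM hwv hφ0 hΔ hvP hP0 hPlt hcdef
  -- Step 5: conclude
  have hvbound : |vF α n u s x| ≤ 2 * Ψ₀ := by
    by_contra hA
    push_neg at hA
    have hA0 : (0:ℝ) ≤ |vF α n u s x| := abs_nonneg _
    have hMΨs : 2*M*Ψ₀*s ≤ 1/2 := by
      have h1 : 2*M*Ψ₀*(1/(4*Ψ₀*M)) = 1/2 := by field_simp; ring
      have h2 : 2*M*Ψ₀*s ≤ 2*M*Ψ₀*T := by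
        apply mul_le_mul_of_nonneg_left hsT (by positivity)
      rw [hT] at h2
      linarith
    have key : ∀ ε, 0 < ε → ε < Ψ₀ → (1 - 2*M*(Ψ₀+ε)*s) * |vF α n u s x| < Ψ₀ + ε := by
      intro ε h1 h2
      have k1 := step4 ε h1 h2 s ⟨hs0, hsT⟩ (x, true)
      have k2 := step4 ε h1 h2 s ⟨hs0, hsT⟩ (x, false)
      norm_num at k1 k2
      rcases abs_cases (vF α n u s x) with ⟨he, _⟩ | ⟨he, _⟩ <;> rw [he]
      · exact k1
      · linarith
    set A := |vF α n u s x| with hAdef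
    have hD0 : (0:ℝ) < 1 + 2*M*s*A := by
      have : (0:ℝ) ≤ 2*M*s*A :=
        mul_nonneg (mul_nonneg (by linarith) hs0) hA0
      linarith
    have hgap : 0 < A/2 - Ψ₀ := by linarith
    set ε := min (Ψ₀/2) ((A/2 - Ψ₀)/(2*(1 + 2*M*s*A))) with hεdef
    have hε1 : 0 < ε := lt_min (by linarith) (by positivity)
    have hε2 : ε < Ψ₀ := lt_of_le_of_lt (min_le_left _ _) (by linarith)
    have hε3 : ε ≤ (A/2 - Ψ₀)/(2*(1 + 2*M*s*A)) := min_le_right _ _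
    have hk := key ε hε1 hε2
    have hε4 : ε * (1 + 2*M*s*A) ≤ (A/2 - Ψ₀)/2 := by
      rw [← le_div_iff₀ hD0]
      rw [div_div]
      exact hε3
    nlinarith [mul_nonneg (by linarith : (0:ℝ) ≤ 1/2 - 2*M*Ψ₀*s) hA0, hk, hε4, hgap]
  -- final computation
  have husx0 : 0 ≤ u s x := hpos s hs0 x
  have husub : u s x ≤ ubar := hmaxp s hs0 x
  have hmusx : 0 < (n:ℝ)^(-α) + u s x := by linarith
  have hmusxM : (n:ℝ)^(-α) + u s x ≤ M := by rw [hMdef]; linarith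
  have hwvs : wF α n u s x = ((n:ℝ)^(-α) + u s x)^2 * vF α n u s x := by
    rw [vF, phin']; field_simp
  have heq : |discLap n (fun y => phin α n (u s y)) x|
      = ((n:ℝ)^(-α) + u s x)^2 * |vF α n u s x| := by
    rw [show discLap n (fun y => phin α n (u s y)) x = wF α n u s x from rfl, hwvs,
      abs_mul, abs_of_nonneg (sq_nonneg _)]
  rw [heq]
  have hsq : ((n:ℝ)^(-α) + u s x)^2 ≤ M^2 := by
    apply pow_le_pow_left₀ hmusx.le hmusxM
  calc ((n:ℝ)^(-α) + u s x)^2 * |vF α n u s x| ≤ M^2 * (2*Ψ₀) :=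
        mul_le_mul hsq hvbound (abs_nonneg _) (sq_nonneg M)
    _ = 2 * M^2 * Ψ₀ := by ring
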